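/- An integral domain R is a Dedekind domain if and only if R is a divisibility domain, i.e., for all nonzero ideals I, J of R with J ⊆ I there exists an ideal I' of R with I · I' = J. -/

import Mathlib

open FractionalIdeal nonZeroDivisors

/-- An integral domain R is a Dedekind domain iff R is a divisibility domain: for all
nonzero ideals I, J of R with J ⊆ I there is an ideal I' with I * I' = J. -/
theorem stmt16 (R : Type*) [CommRing R] [IsDomain R] :
    IsDedekindDomain R ↔
      ∀ I J : Ideal R, I ≠ ⊥ → J ≠ ⊥ → J ≤ I → ∃ I' : Ideal R, I * I' = J := by
  constructor
  · intro _ I J _ _ hJI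
    obtain ⟨I', rfl⟩ := Ideal.dvd_iff_le.mpr hJI
    exact ⟨I', rfl⟩
  · intro h
    rw [isDedekindDomain_iff_mul_inv_cancel (K := FractionRing R)]
    intro I hI
    obtain ⟨a, aI, ha, rfl⟩ := exists_eq_spanSingleton_mul I
    set K := FractionRing R
    have haK : algebraMap R K a ≠ 0 := fun h' => ha (IsFractionRing.to_map_eq_zero_iff.mp h')
    have haI : aI ≠ ⊥ := by
      rintro rfl
      simp at hI
    obtain ⟨b, hb, hb0⟩ := Submodule.exists_mem_ne_zero_of_ne_bot haI
    have hbK : algebraMap R K b ≠ 0 := fun h' => hb0 (IsFractionRing.to_map_eq_zero_iff.mp h')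
    obtain ⟨I', hI'⟩ := h aI (Ideal.span {b}) haI
      (by simpa [Ideal.span_eq_bot] using hb0)
      ((Ideal.span_singleton_le_iff_mem _).mpr hb)
    rw [mul_inv_cancel_iff]
    refine ⟨spanSingleton R⁰ (algebraMap R K a) * spanSingleton R⁰ (algebraMap R K b)⁻¹ * I', ?_⟩
    have : (aI : FractionalIdeal R⁰ K) * (I' : FractionalIdeal R⁰ K)
        = spanSingleton R⁰ (algebraMap R K b) := by
      rw [← coeIdeal_mul, hI', coeIdeal_span_singleton]
    calc spanSingleton R⁰ (algebraMap R K a)⁻¹ * ↑aI *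
          (spanSingleton R⁰ (algebraMap R K a) * spanSingleton R⁰ (algebraMap R K b)⁻¹ * ↑I')
        = (spanSingleton R⁰ (algebraMap R K a)⁻¹ * spanSingleton R⁰ (algebraMap R K a)) *
          ((↑aI * ↑I') * spanSingleton R⁰ (algebraMap R K b)⁻¹) := by ring
      _ = 1 := by
          rw [this, spanSingleton_mul_spanSingleton, inv_mul_cancel₀ haK,
            spanSingleton_mul_spanSingleton, mul_inv_cancel₀ hbK, spanSingleton_one, mul_one]
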